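/- arXiv:math/0404175 — 3 statements merged into one kernel-verified Lean document; each statement's English description precedes it below -/
import Mathlib

section
/- Let M be a finite-dimensional space of linear functionals on Π(ℝ^d) with a graded basis λ₁,…,λₙ (orders κᵢ), and let G ⊆ Π(ℝ^d) be any subspace correct for M (i.e., for every p ∈ Π there is a unique f ∈ G with μf = μp for all μ ∈ M). Then for every k, dim(G ∩ Π_{<k}) ≤ n − dim(M ∩ ⊥Π_{<k}). -/
open MvPolynomial Finset

noncomputable section

/-- The multi-index on the first (`x`) block of variables of a monomial in `Fin d ⊕ Fin d`. -/
def xpart {d : ℕ} (m : (Fin d ⊕ Fin d) →₀ ℕ) : Fin d →₀ ℕ :=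
  Finsupp.equivFunOnFinite.symm fun i => m (Sum.inl i)

/-- The multi-index on the second (`y`) block of variables. -/
def ypart {d : ℕ} (m : (Fin d ⊕ Fin d) →₀ ℕ) : Fin d →₀ ℕ :=
  Finsupp.equivFunOnFinite.symm fun i => m (Sum.inr i)

/-- `(l ⊗ m) f`: apply `l` in the `x`-variables and `m` in the `y`-variables of a
two-block polynomial `f`, via its canonical representation as a sum of products
of monomials in `x` and monomials in `y`. -/
def tensorApply {d : ℕ} (l m : Module.Dual ℝ (MvPolynomial (Fin d) ℝ))
    (f : MvPolynomial (Fin d ⊕ Fin d) ℝ) : ℝ :=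
  ∑ mo ∈ f.support, f.coeff mo * l (monomial (xpart mo) 1) * m (monomial (ypart mo) 1)

/-- Apply the linear functional `l` in the second (`y`) block of variables,
yielding a polynomial in the first (`x`) block of variables. -/
def applySecond {d : ℕ} (l : Module.Dual ℝ (MvPolynomial (Fin d) ℝ))
    (f : MvPolynomial (Fin d ⊕ Fin d) ℝ) : MvPolynomial (Fin d) ℝ :=
  ∑ mo ∈ f.support, monomial (xpart mo) (f.coeff mo * l (monomial (ypart mo) 1))

/-- The polynomial `(x,y) ↦ ‖x-y‖^(2k)` in the `2d` variables `x(1),…,x(d),y(1),…,y(d)`. -/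
def distPoly (d k : ℕ) : MvPolynomial (Fin d ⊕ Fin d) ℝ :=
  (∑ i : Fin d, (X (Sum.inl i) - X (Sum.inr i)) ^ 2) ^ k

/-- `l` vanishes on all polynomials of total degree `< k` (i.e. `l ⊥ Π_{<k}`). -/
def VanishesLT {d : ℕ} (l : Module.Dual ℝ (MvPolynomial (Fin d) ℝ)) (k : ℕ) : Prop :=
  ∀ p : MvPolynomial (Fin d) ℝ, p.totalDegree < k → l p = 0

/-- `l` vanishes on all polynomials of total degree `≤ k` (i.e. `l ⊥ Π_{≤k}`). -/
def VanishesLE {d : ℕ} (l : Module.Dual ℝ (MvPolynomial (Fin d) ℝ)) (k : ℕ) : Prop :=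
  ∀ p : MvPolynomial (Fin d) ℝ, p.totalDegree ≤ k → l p = 0

/-- `p_{a,β} : x ↦ ‖x‖^(2a) x^β` as a polynomial. -/
def pPoly (d : ℕ) (a : ℕ) (β : Fin d →₀ ℕ) : MvPolynomial (Fin d) ℝ :=
  (∑ i : Fin d, X i ^ 2) ^ a * monomial β 1

/-- `⊥Π_{<k}`: the subspace of linear functionals vanishing on all polynomials
of total degree `< k`. -/
def perpLT (d k : ℕ) : Submodule ℝ (Module.Dual ℝ (MvPolynomial (Fin d) ℝ)) where
  carrier := {l | VanishesLT l k}
  zero_mem' := fun _ _ => rfl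
  add_mem' := fun {a b} ha hb p hp => by
    simp [LinearMap.add_apply, ha p hp, hb p hp]
  smul_mem' := fun c l hl p hp => by
    simp [LinearMap.smul_apply, hl p hp]

/-- `Π_{<k}`: the subspace of polynomials of total degree `< k`. -/
def degLT (d k : ℕ) : Submodule ℝ (MvPolynomial (Fin d) ℝ) where
  carrier := {p | ∀ m ∈ p.support, (m.sum fun _ e => e) < k}
  zero_mem' := by simp
  add_mem' := fun {a b} ha hb m hm => by
    rcases Finset.mem_union.mp (MvPolynomial.support_add hm) with h | h
    · exact ha m h
    · exact hb m h
  smul_mem' := fun c p hp m hm => hp m (MvPolynomial.support_smul hm)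

set_option maxHeartbeats 1000000
set_option synthInstance.maxHeartbeats 1000000

/-- If `M` is an `n`-dimensional space of linear functionals with a graded basis (orders
`κᵢ`), and `G` is a polynomial subspace correct for `M` (every `p` has a unique match in
`G` at `M`), then for every `k`, `dim(G ∩ Π_{<k}) ≤ n − dim(M ∩ ⊥Π_{<k})`. -/
theorem dim_correct_subspace_le (d n : ℕ)
    (M : Submodule ℝ (Module.Dual ℝ (MvPolynomial (Fin d) ℝ)))
    (hM : Module.finrank ℝ M = n)
    (lam : Fin n → Module.Dual ℝ (MvPolynomial (Fin d) ℝ))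
    (hmem : ∀ i, lam i ∈ M)
    (κ : Fin n → ℕ)
    -- `κ i` is the order of `lam i`: the largest `k` with `lam i ⊥ Π_{<k}`
    (horder : ∀ i, VanishesLT (lam i) (κ i) ∧ ¬ VanishesLT (lam i) (κ i + 1))
    -- the basis is graded: `i ↦ κ i` is nondecreasing and, for each `k`,
    -- `(lam i : κ i ≥ k)` is a basis of `M ∩ ⊥Π_{<k}`
    (hmono : Monotone κ)
    (hbasis : ∀ k : ℕ,
      LinearIndependent ℝ (fun i : {i : Fin n // k ≤ κ i} => lam i.1) ∧
      Submodule.span ℝ (Set.range fun i : {i : Fin n // k ≤ κ i} => lam i.1) =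
        M ⊓ perpLT d k)
    (G : Submodule ℝ (MvPolynomial (Fin d) ℝ))
    (hG : ∀ p : MvPolynomial (Fin d) ℝ, ∃! f, f ∈ G ∧ ∀ μ ∈ M, μ f = μ p)
    : ∀ k : ℕ, Module.finrank ℝ ↥(G ⊓ degLT d k) ≤
        n - Module.finrank ℝ ↥(M ⊓ perpLT d k) := by
  intro k
  classical
  -- key vanishing fact: a functional ⊥ Π_{<k} kills members of degLT d k
  have hvan : ∀ (l : Module.Dual ℝ (MvPolynomial (Fin d) ℝ)), VanishesLT l k →
      ∀ p ∈ degLT d k, l p = 0 := by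
    intro l hl p hp
    by_cases hp0 : p = 0
    · simp [hp0]
    · apply hl
      have hne : p.support.Nonempty := MvPolynomial.support_nonempty.mpr hp0
      obtain ⟨m, hm⟩ := hne
      have hk : 0 < k := Nat.lt_of_le_of_lt (Nat.zero_le _) (hp m hm)
      rw [MvPolynomial.totalDegree]
      exact Finset.sup_lt_iff hk |>.mpr fun b hb => hp b hb
  -- the evaluation map into ℝ^{i : κ i < k}
  let T : ↥(G ⊓ degLT d k) →ₗ[ℝ] ({i : Fin n // κ i < k} → ℝ) :=
    LinearMap.pi fun i => (lam i.1).comp (Submodule.subtype _)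
  have hTinj : Function.Injective T := by
    rw [injective_iff_map_eq_zero]
    intro f hf
    -- every lam i kills f
    have hlam : ∀ i : Fin n, lam i f.1 = 0 := by
      intro i
      by_cases hi : κ i < k
      · exact congrFun hf ⟨i, hi⟩
      · push_neg at hi
        refine hvan (lam i) (fun p hp => (horder i).1 p (lt_of_lt_of_le hp hi)) _ f.2.2
    -- hence every μ ∈ M kills f
    have hMspan : Submodule.span ℝ
        (Set.range fun i : {i : Fin n // 0 ≤ κ i} => lam i.1) = M := by
      have hperp0 : perpLT d 0 = ⊤ := by
        ext l
        simp only [Submodule.mem_top, iff_true]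
        intro p hp
        exact absurd hp (Nat.not_lt_zero _)
      rw [(hbasis 0).2, hperp0, inf_top_eq]
    have hMkill : ∀ μ ∈ M, μ f.1 = 0 := by
      intro μ hμ
      rw [← hMspan] at hμ
      induction hμ using Submodule.span_induction with
      | mem x hx => obtain ⟨i, rfl⟩ := hx; exact hlam i.1
      | zero => simp
      | add x y _ _ hx hy => simp [LinearMap.add_apply, hx, hy]
      | smul c x _ hx => simp [LinearMap.smul_apply, hx]
    obtain ⟨g, hgsp, hguniq⟩ := hG 0
    have h1 : f.1 = g := hguniq _ ⟨f.2.1, fun μ hμ => by simp [hMkill μ hμ]⟩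
    have h2 : (0 : MvPolynomial (Fin d) ℝ) = g :=
      hguniq _ ⟨G.zero_mem, fun μ hμ => by simp⟩
    exact Subtype.ext (h1.trans h2.symm)
  -- finrank of M ⊓ perpLT d k equals the number of i with k ≤ κ i
  have hWrank : Module.finrank ℝ ↥(M ⊓ perpLT d k) = Fintype.card {i : Fin n // k ≤ κ i} := by
    rw [← (hbasis k).2]
    exact finrank_span_eq_card (hbasis k).1
  have hle : Module.finrank ℝ ↥(G ⊓ degLT d k) ≤ Fintype.card {i : Fin n // κ i < k} := by
    have := LinearMap.finrank_le_finrank_of_injective hTinj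
    rwa [Module.finrank_pi] at this
  have hcard : Fintype.card {i : Fin n // κ i < k}
      = n - Fintype.card {i : Fin n // k ≤ κ i} := by
    have h1 : Fintype.card {i : Fin n // κ i < k} = Fintype.card {i : Fin n // ¬ k ≤ κ i} := by
      apply Fintype.card_congr
      exact Equiv.subtypeEquivRight fun i => by omega
    rw [h1, Fintype.card_subtype_compl, Fintype.card_fin]
  rw [hWrank, ← hcard]
  exact hle
end
end

section
/- A finite-rank linear projector P on Π(ℝ^d) is of minimal degree (i.e., dim(G ∩ Π_{<k}) ≤ dim(ran P ∩ Π_{<k}) for all k and all subspaces G correct for ⊥ker P) if and only if dim(ran P ∩ Π_{<k}) + dim(⊥ker P ∩ ⊥Π_{<k}) = dim(ran P) for all k. -/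
open MvPolynomial Finset

noncomputable section

namespace MinDegAux

open Submodule LinearMap Module

variable {d : ℕ} {P : MvPolynomial (Fin d) ℝ →ₗ[ℝ] MvPolynomial (Fin d) ℝ}

lemma mem_degLT_of_lt {k : ℕ} {p : MvPolynomial (Fin d) ℝ} (h : p.totalDegree < k) :
    p ∈ degLT d k :=
  fun m hm => lt_of_le_of_lt (MvPolynomial.le_totalDegree hm) h

lemma perpLT_vanish {k : ℕ} {l : Module.Dual ℝ (MvPolynomial (Fin d) ℝ)}
    (hl : l ∈ perpLT d k) {p : MvPolynomial (Fin d) ℝ} (hp : p ∈ degLT d k) : l p = 0 := by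
  conv_lhs => rw [p.as_sum, map_sum]
  refine Finset.sum_eq_zero fun m hm => hl _ ?_
  exact lt_of_le_of_lt (MvPolynomial.totalDegree_monomial_le m _) (hp m hm)

instance degLT_fd (d k : ℕ) : FiniteDimensional ℝ (degLT d k) :=
  Submodule.finiteDimensional_of_le (S₂ := MvPolynomial.restrictTotalDegree (Fin d) ℝ k)
    fun p hp => (MvPolynomial.mem_restrictTotalDegree _ _ _).mpr
      (Finset.sup_le fun m hm => le_of_lt (hp m hm))

lemma hker_of_ann {x : MvPolynomial (Fin d) ℝ}
    (hx : ∀ μ ∈ (LinearMap.ker P).dualAnnihilator, μ x = 0) : x ∈ LinearMap.ker P := by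
  have h : ∀ φ : Module.Dual ℝ (MvPolynomial (Fin d) ℝ), φ (P x) = 0 := by
    intro φ
    have hmem : (φ ∘ₗ P) ∈ (LinearMap.ker P).dualAnnihilator := by
      rw [Submodule.mem_dualAnnihilator]
      intro w hw
      simp [LinearMap.mem_ker.mp hw]
    simpa using hx _ hmem
  exact LinearMap.mem_ker.mpr ((Module.forall_dual_apply_eq_zero_iff ℝ _).mp h)

lemma correct_of_compl {G : Submodule ℝ (MvPolynomial (Fin d) ℝ)}
    (hdisj : G ⊓ LinearMap.ker P = ⊥) (hcod : G ⊔ LinearMap.ker P = ⊤)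
    (p : MvPolynomial (Fin d) ℝ) :
    ∃! f, f ∈ G ∧ ∀ μ ∈ (LinearMap.ker P).dualAnnihilator, μ f = μ p := by
  have hp : p ∈ G ⊔ LinearMap.ker P := hcod ▸ Submodule.mem_top
  obtain ⟨g, hg, h, hh, rfl⟩ := Submodule.mem_sup.mp hp
  refine ⟨g, ⟨hg, fun μ hμ => ?_⟩, fun f' ⟨hf', hf'2⟩ => ?_⟩
  · have := (Submodule.mem_dualAnnihilator _).mp hμ h hh
    simp [this]
  · have hzero : ∀ μ ∈ (LinearMap.ker P).dualAnnihilator, μ (f' - g) = 0 := by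
      intro μ hμ
      have h1 := hf'2 μ hμ
      have h2 := (Submodule.mem_dualAnnihilator _).mp hμ h hh
      simp only [map_sub, h1]
      simp [h2]
    have hmem : f' - g ∈ G ⊓ LinearMap.ker P :=
      ⟨G.sub_mem hf' hg, hker_of_ann hzero⟩
    rw [hdisj] at hmem
    have : f' - g = 0 := hmem
    linear_combination (norm := module) this

lemma disj_of_correct {G : Submodule ℝ (MvPolynomial (Fin d) ℝ)}
    (hG : ∀ p : MvPolynomial (Fin d) ℝ,
      ∃! f, f ∈ G ∧ ∀ μ ∈ (LinearMap.ker P).dualAnnihilator, μ f = μ p) :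
    G ⊓ LinearMap.ker P = ⊥ := by
  rw [eq_bot_iff]
  rintro x ⟨hxG, hxK⟩
  obtain ⟨f, _, huniq⟩ := hG 0
  have h1 : x = f := huniq x ⟨hxG, fun μ hμ => by
    simp [(Submodule.mem_dualAnnihilator _).mp hμ x hxK]⟩
  have h2 : (0 : MvPolynomial (Fin d) ℝ) = f := huniq 0 ⟨G.zero_mem, fun μ hμ => rfl⟩
  simp [h1, ← h2, Submodule.mem_bot]

lemma map_fd (k : ℕ) : FiniteDimensional ℝ ((degLT d k).map P) :=
  Module.Finite.map _ _

lemma dim_le_of_disj (k : ℕ) {G : Submodule ℝ (MvPolynomial (Fin d) ℝ)}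
    (hdisj : G ⊓ LinearMap.ker P = ⊥) :
    Module.finrank ℝ ↥(G ⊓ degLT d k) ≤ Module.finrank ℝ ↥((degLT d k).map P) := by
  haveI := map_fd (P := P) k
  set W := (degLT d k).map P
  let f : ↥(G ⊓ degLT d k) →ₗ[ℝ] ↥W :=
    LinearMap.codRestrict W (P.domRestrict (G ⊓ degLT d k))
      (fun x => ⟨x.1, x.2.2, rfl⟩)
  have hinj : Function.Injective f := by
    intro x y hxy
    have h : P (x.1 - y.1) = 0 := by
      have := congrArg Subtype.val hxy
      simp only [f, LinearMap.codRestrict_apply, LinearMap.domRestrict_apply] at this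
      rw [map_sub, sub_eq_zero]; exact this
    have hmem : x.1 - y.1 ∈ G ⊓ LinearMap.ker P :=
      ⟨G.sub_mem x.2.1 y.2.1, h⟩
    rw [hdisj] at hmem
    have h0 : x.1 - y.1 = 0 := by simpa using hmem
    exact Subtype.ext (sub_eq_zero.mp h0)
  exact LinearMap.finrank_le_finrank_of_injective hinj

lemma dim_range_inf_le (hproj : P ∘ₗ P = P) (k : ℕ)
    [FiniteDimensional ℝ ↥(LinearMap.range P)] :
    Module.finrank ℝ ↥(LinearMap.range P ⊓ degLT d k) ≤
      Module.finrank ℝ ↥((degLT d k).map P) := by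
  haveI := map_fd (P := P) k
  refine Submodule.finrank_mono ?_
  rintro x ⟨⟨z, rfl⟩, hx2⟩
  exact ⟨P z, hx2, DFunLike.congr_fun hproj z⟩

lemma exists_good_compl (k : ℕ) :
    ∃ G : Submodule ℝ (MvPolynomial (Fin d) ℝ),
      G ⊓ LinearMap.ker P = ⊥ ∧ G ⊔ LinearMap.ker P = ⊤ ∧
      Module.finrank ℝ ↥((degLT d k).map P) ≤ Module.finrank ℝ ↥(G ⊓ degLT d k) := by
  classical
  set D := degLT d k
  set K' : Submodule ℝ ↥D := (LinearMap.ker P).comap D.subtype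
  obtain ⟨S', hS'⟩ := K'.exists_isCompl
  set S : Submodule ℝ (MvPolynomial (Fin d) ℝ) := S'.map D.subtype
  have hSD : S ≤ D := by
    rintro x ⟨y, hy, rfl⟩; exact y.2
  have hSK : S ⊓ LinearMap.ker P = ⊥ := by
    rw [eq_bot_iff]
    rintro x ⟨⟨y, hy, rfl⟩, hk⟩
    have hyK : y ∈ K' := hk
    have : y ∈ S' ⊓ K' := ⟨hy, hyK⟩
    rw [hS'.symm.inf_eq_bot] at this
    have hy0 : y = 0 := by simpa using this
    simp [hy0]
  have hrank : Module.finrank ℝ ↥((degLT d k).map P) = Module.finrank ℝ ↥S := by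
    have h1 : Module.finrank ℝ ↥S = Module.finrank ℝ ↥S' :=
      Submodule.finrank_map_subtype_eq D S'
    have h2 : Module.finrank ℝ ↥S' + Module.finrank ℝ ↥K' = Module.finrank ℝ ↥D := by
      rw [add_comm]
      exact Submodule.finrank_add_eq_of_isCompl hS'
    have h3 : Module.finrank ℝ ↥((degLT d k).map P) + Module.finrank ℝ ↥K' =
        Module.finrank ℝ ↥D := by
      have hrn := LinearMap.finrank_range_add_finrank_ker (P ∘ₗ D.subtype)
      rw [LinearMap.range_comp, Submodule.range_subtype] at hrn
      rw [LinearMap.ker_comp] at hrn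
      exact hrn
    omega
  obtain ⟨T, hT⟩ := (S ⊔ LinearMap.ker P).exists_isCompl
  refine ⟨S ⊔ T, ?_, ?_, ?_⟩
  · rw [eq_bot_iff]
    rintro x ⟨hx1, hx2⟩
    obtain ⟨s, hs, t, ht, rfl⟩ := Submodule.mem_sup.mp hx1
    have htmem : t ∈ (S ⊔ LinearMap.ker P) ⊓ T := by
      refine ⟨?_, ht⟩
      have : t = (s + t) - s := by ring
      rw [this]
      exact Submodule.sub_mem _ (Submodule.mem_sup_right hx2) (Submodule.mem_sup_left hs)
    rw [hT.inf_eq_bot] at htmem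
    have ht0 : t = 0 := htmem
    have hsmem : s ∈ S ⊓ LinearMap.ker P := ⟨hs, by simpa [ht0] using hx2⟩
    rw [hSK] at hsmem
    have : s = 0 := hsmem
    simp [this, ht0]
  · rw [sup_assoc, sup_comm T, ← sup_assoc]
    exact hT.sup_eq_top
  · rw [hrank]
    refine Submodule.finrank_mono ?_
    exact le_inf le_sup_left hSD

set_option maxHeartbeats 2000000 in
set_option synthInstance.maxHeartbeats 500000 in
lemma dim_ann_perp (hproj : P ∘ₗ P = P) (k : ℕ)
    [FiniteDimensional ℝ ↥(LinearMap.range P)] :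
    Module.finrank ℝ ↥((LinearMap.ker P).dualAnnihilator ⊓ perpLT d k) +
      Module.finrank ℝ ↥((degLT d k).map P) =
      Module.finrank ℝ ↥(LinearMap.range P) := by
  classical
  have hPP : ∀ x, P (P x) = P x := fun x => DFunLike.congr_fun hproj x
  set W := (degLT d k).map P with hW
  have hWle : W ≤ LinearMap.range P := LinearMap.map_le_range
  set U : Submodule ℝ ↥(LinearMap.range P) := W.comap (LinearMap.range P).subtype with hU
  have hUW : Module.finrank ℝ ↥U = Module.finrank ℝ ↥W :=
    (Submodule.comapSubtypeEquivOfLe hWle).finrank_eq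
  have hFmem : ∀ μ : ↥((LinearMap.ker P).dualAnnihilator ⊓ perpLT d k),
      ((μ : Module.Dual ℝ (MvPolynomial (Fin d) ℝ)) ∘ₗ (LinearMap.range P).subtype)
        ∈ U.dualAnnihilator := by
    intro μ
    refine (Submodule.mem_dualAnnihilator _).mpr ?_
    rintro ⟨w, hw⟩ hwU
    have hwW : w ∈ W := hwU
    obtain ⟨q, hq, rfl⟩ := hwW
    have hμ1 := (Submodule.mem_inf.mp μ.2).1
    have hμ2 := (Submodule.mem_inf.mp μ.2).2
    have hker : P q - q ∈ LinearMap.ker P := by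
      simp [LinearMap.mem_ker, map_sub, hPP]
    have h1 : (μ : Module.Dual ℝ _) (P q - q) = 0 :=
      (Submodule.mem_dualAnnihilator _).mp hμ1 _ hker
    have h2 : (μ : Module.Dual ℝ _) q = 0 := perpLT_vanish hμ2 hq
    have : (μ : Module.Dual ℝ _) (P q) = 0 := by
      have := h1
      simp only [map_sub, h2, sub_zero] at this
      exact this
    simpa using this
  let F : ↥((LinearMap.ker P).dualAnnihilator ⊓ perpLT d k) →ₗ[ℝ] ↥U.dualAnnihilator :=
  { toFun := fun μ => ⟨(μ : Module.Dual ℝ _) ∘ₗ (LinearMap.range P).subtype, hFmem μ⟩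
    map_add' := fun μ ν => by apply Subtype.ext; ext x; simp
    map_smul' := fun c μ => by apply Subtype.ext; ext x; simp }
  have hsub : ∀ (ρ : ↥((LinearMap.ker P).dualAnnihilator ⊓ perpLT d k))
      (x : MvPolynomial (Fin d) ℝ),
      (ρ : Module.Dual ℝ _) x =
        ((ρ : Module.Dual ℝ _) ∘ₗ (LinearMap.range P).subtype)
          ⟨P x, LinearMap.mem_range_self P x⟩ := by
    intro ρ x
    have hx : x - P x ∈ LinearMap.ker P := by simp [LinearMap.mem_ker, map_sub, hPP]
    have h0 : (ρ : Module.Dual ℝ _) (x - P x) = 0 :=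
      (Submodule.mem_dualAnnihilator _).mp (Submodule.mem_inf.mp ρ.2).1 _ hx
    rw [map_sub, sub_eq_zero] at h0
    simpa using h0
  have hFinj : Function.Injective F := by
    intro μ ν h
    apply Subtype.ext; apply LinearMap.ext; intro x
    rw [hsub μ x, hsub ν x]
    rw [show ((μ : Module.Dual ℝ _) ∘ₗ (LinearMap.range P).subtype) =
        ((ν : Module.Dual ℝ _) ∘ₗ (LinearMap.range P).subtype) from congrArg Subtype.val h]
  have hFsurj : Function.Surjective F := by
    rintro ⟨φ, hφ⟩
    have hμann : (φ ∘ₗ P.rangeRestrict) ∈ (LinearMap.ker P).dualAnnihilator := by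
      refine (Submodule.mem_dualAnnihilator _).mpr ?_
      intro w hw
      have hz : P.rangeRestrict w = 0 := by
        apply Subtype.ext; simpa using hw
      simp [LinearMap.comp_apply, hz]
    have hμperp : (φ ∘ₗ P.rangeRestrict) ∈ perpLT d k := by
      intro p hp
      have hmem : P.rangeRestrict p ∈ U := by
        have : (P.rangeRestrict p : MvPolynomial (Fin d) ℝ) ∈ W :=
          ⟨p, mem_degLT_of_lt hp, rfl⟩
        exact this
      exact (Submodule.mem_dualAnnihilator _).mp hφ _ hmem
    refine ⟨⟨φ ∘ₗ P.rangeRestrict, Submodule.mem_inf.mpr ⟨hμann, hμperp⟩⟩, ?_⟩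
    apply Subtype.ext; apply LinearMap.ext; intro y
    have hy : P.rangeRestrict (y : MvPolynomial (Fin d) ℝ) = y := by
      apply Subtype.ext
      obtain ⟨z, hz⟩ := y.2
      simp only [LinearMap.rangeRestrict, LinearMap.codRestrict_apply]
      rw [← hz, hPP]
    show φ (P.rangeRestrict ((LinearMap.range P).subtype y)) = φ y
    rw [show (LinearMap.range P).subtype y = (y : MvPolynomial (Fin d) ℝ) from rfl, hy]
  have e1 : Module.finrank ℝ ↥((LinearMap.ker P).dualAnnihilator ⊓ perpLT d k) =
      Module.finrank ℝ ↥U.dualAnnihilator :=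
    (LinearEquiv.ofBijective F ⟨hFinj, hFsurj⟩).finrank_eq
  have e2 : Module.finrank ℝ (↥(LinearMap.range P) ⧸ U) =
      Module.finrank ℝ ↥U.dualAnnihilator :=
    (Subspace.quotEquivAnnihilator U).finrank_eq
  have e3 := U.finrank_quotient_add_finrank
  omega

end MinDegAux

/-- A finite-rank linear projector `P` on `Π` is of minimal degree — i.e.
`dim(G ∩ Π_{<k}) ≤ dim(ran P ∩ Π_{<k})` for all `k` and all subspaces `G` correct for
`⊥ker P` — if and only if
`dim(ran P ∩ Π_{<k}) + dim(⊥ker P ∩ ⊥Π_{<k}) = dim(ran P)` for all `k`. -/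


theorem minimal_degree_iff (d : ℕ)
    (P : MvPolynomial (Fin d) ℝ →ₗ[ℝ] MvPolynomial (Fin d) ℝ)
    (hproj : P ∘ₗ P = P)
    (hfin : FiniteDimensional ℝ ↥(LinearMap.range P)) :
    (∀ G : Submodule ℝ (MvPolynomial (Fin d) ℝ),
        (∀ p : MvPolynomial (Fin d) ℝ,
          ∃! f, f ∈ G ∧ ∀ μ ∈ (LinearMap.ker P).dualAnnihilator, μ f = μ p) →
        ∀ k : ℕ, Module.finrank ℝ ↥(G ⊓ degLT d k) ≤
          Module.finrank ℝ ↥(LinearMap.range P ⊓ degLT d k)) ↔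
      (∀ k : ℕ,
        Module.finrank ℝ ↥(LinearMap.range P ⊓ degLT d k) +
            Module.finrank ℝ ↥((LinearMap.ker P).dualAnnihilator ⊓ perpLT d k) =
          Module.finrank ℝ ↥(LinearMap.range P)) := by
  classical
  haveI := hfin
  constructor
  · intro hmin k
    obtain ⟨G, hdisj, hcod, hge⟩ := MinDegAux.exists_good_compl (P := P) k
    have h1 := hmin G (MinDegAux.correct_of_compl hdisj hcod) k
    have h2 := MinDegAux.dim_range_inf_le hproj k
    have h3 := MinDegAux.dim_ann_perp hproj k
    omega
  · intro hdim G hG k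
    have hA := MinDegAux.dim_le_of_disj k (MinDegAux.disj_of_correct hG)
    have hC := MinDegAux.dim_range_inf_le hproj k
    have hD := MinDegAux.dim_ann_perp hproj k
    have hk := hdim k
    omega
end
end

section
/- Let λ be a linear functional on Π(ℝ^d) of order κ := max{k : λ vanishes on Π_{<k}} (λ ≠ 0). Then the leading (degree-κ homogeneous) part of the polynomial x ↦ λ‖x−·‖^(2κ) equals (−1)^κ ∑_{b: κ−b even} 2^b · κ!/(((κ−b)/2)!)² · ∑_{|β|=b} (λ p_{(κ−b)/2,β}) · ‖x‖^(κ−b) x^β / β!, a nonzero homogeneous polynomial of degree κ; here ‖x‖^(κ−b) means ‖x‖^(2·(κ−b)/2) with (κ−b)/2 ∈ ℤ₊, and p_{a,β}(x) = ‖x‖^(2a)x^β. -/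
open MvPolynomial Finset

noncomputable section

section AUX

variable {d : ℕ}

lemma xpart_apply (m : (Fin d ⊕ Fin d) →₀ ℕ) (i : Fin d) : xpart m i = m (Sum.inl i) := rfl
lemma ypart_apply (m : (Fin d ⊕ Fin d) →₀ ℕ) (i : Fin d) : ypart m i = m (Sum.inr i) := rfl

lemma applySecond_eq_sum (lam : Module.Dual ℝ (MvPolynomial (Fin d) ℝ))
    (f : MvPolynomial (Fin d ⊕ Fin d) ℝ) (t : Finset ((Fin d ⊕ Fin d) →₀ ℕ))
    (h : f.support ⊆ t) :
    applySecond lam f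
      = ∑ mo ∈ t, monomial (xpart mo) (f.coeff mo * lam (monomial (ypart mo) 1)) := by
  refine Finset.sum_subset h fun mo _ hmo => ?_
  rw [MvPolynomial.notMem_support_iff.mp hmo, zero_mul, map_zero]

/-- `applySecond lam` as a linear map. -/
def AS (lam : Module.Dual ℝ (MvPolynomial (Fin d) ℝ)) :
    MvPolynomial (Fin d ⊕ Fin d) ℝ →ₗ[ℝ] MvPolynomial (Fin d) ℝ where
  toFun := applySecond lam
  map_add' f g := by
    rw [applySecond_eq_sum lam (f + g) (f.support ∪ g.support)
        (MvPolynomial.support_add),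
      applySecond_eq_sum lam f (f.support ∪ g.support) subset_union_left,
      applySecond_eq_sum lam g (f.support ∪ g.support) subset_union_right,
      ← Finset.sum_add_distrib]
    refine Finset.sum_congr rfl fun mo _ => ?_
    rw [MvPolynomial.coeff_add, add_mul, map_add]
  map_smul' r f := by
    rw [RingHom.id_apply]
    rw [applySecond_eq_sum lam (r • f) f.support (MvPolynomial.support_smul),
      applySecond_eq_sum lam f f.support subset_rfl]
    rw [Finset.smul_sum]
    refine Finset.sum_congr rfl fun mo _ => ?_
    rw [MvPolynomial.coeff_smul, MvPolynomial.smul_monomial, smul_eq_mul, smul_eq_mul, mul_assoc]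

lemma AS_monomial (lam : Module.Dual ℝ (MvPolynomial (Fin d) ℝ))
    (m : (Fin d ⊕ Fin d) →₀ ℕ) (c : ℝ) :
    AS lam (monomial m c) = monomial (xpart m) (c * lam (monomial (ypart m) 1)) := by
  show applySecond lam _ = _
  rw [applySecond_eq_sum lam _ {m} MvPolynomial.support_monomial_subset,
    Finset.sum_singleton, MvPolynomial.coeff_monomial, if_pos rfl]

end AUX
section AUX2

variable {d : ℕ}

lemma xpart_combine (α β : Fin d →₀ ℕ) :
    xpart (α.mapDomain Sum.inl + β.mapDomain Sum.inr) = α := by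
  ext i
  rw [xpart_apply, Finsupp.add_apply,
    Finsupp.mapDomain_apply Sum.inl_injective,
    Finsupp.mapDomain_notin_range _ _ (by simp), add_zero]

lemma ypart_combine (α β : Fin d →₀ ℕ) :
    ypart (α.mapDomain Sum.inl + β.mapDomain Sum.inr) = β := by
  ext i
  rw [ypart_apply, Finsupp.add_apply,
    Finsupp.mapDomain_apply Sum.inr_injective,
    Finsupp.mapDomain_notin_range _ _ (by simp), zero_add]

lemma AS_rename_mul (lam : Module.Dual ℝ (MvPolynomial (Fin d) ℝ))
    (p q : MvPolynomial (Fin d) ℝ) :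
    AS lam (rename Sum.inl p * rename Sum.inr q) = lam q • p := by
  induction p using MvPolynomial.induction_on' with
  | add p p' hp hp' =>
    rw [map_add, add_mul, map_add, hp, hp', smul_add]
  | monomial α c =>
    induction q using MvPolynomial.induction_on' with
    | add q q' hq hq' =>
      rw [map_add, mul_add, map_add, hq, hq', map_add, add_smul]
    | monomial β e =>
      rw [rename_monomial, rename_monomial, MvPolynomial.monomial_mul, AS_monomial,
        xpart_combine, ypart_combine]
      have : (monomial β e : MvPolynomial (Fin d) ℝ) = e • monomial β 1 := by
        rw [MvPolynomial.smul_monomial, smul_eq_mul, mul_one]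
      rw [this, map_smul, MvPolynomial.smul_monomial]
      rw [smul_eq_mul, smul_eq_mul]
      ring

end AUX2
section AUX3

variable {d : ℕ}

/-- Multinomial theorem indexed by `finsuppAntidiag`. -/
lemma sum_pow_finsuppAntidiag {R : Type*} [CommSemiring R] (g : Fin d → R) (n : ℕ) :
    (∑ i, g i) ^ n
      = ∑ β ∈ finsuppAntidiag (univ : Finset (Fin d)) n,
          (Nat.multinomial univ β : R) * ∏ i, g i ^ β i := by
  classical
  rw [Finset.sum_pow_eq_sum_piAntidiag]
  refine Finset.sum_nbij' (fun f => Finsupp.equivFunOnFinite.symm f)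
    (fun β => ⇑β) ?_ ?_ ?_ ?_ ?_
  · intro f hf
    rw [Finset.mem_piAntidiag] at hf
    rw [Finset.mem_finsuppAntidiag]
    refine ⟨?_, Finset.subset_univ _⟩
    rw [← hf.1]
    exact Finset.sum_congr rfl fun i _ => rfl
  · intro β hβ
    rw [Finset.mem_finsuppAntidiag] at hβ
    rw [Finset.mem_piAntidiag]
    exact ⟨hβ.1, fun i _ => Finset.mem_univ i⟩
  · intro f _
    exact Finsupp.equivFunOnFinite.apply_symm_apply f
  · intro β _
    exact Finsupp.equivFunOnFinite_symm_coe β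
  · intro f _
    rfl

lemma monomial_one_eq (β : Fin d →₀ ℕ) :
    (monomial β (1 : ℝ) : MvPolynomial (Fin d) ℝ) = ∏ i, X i ^ β i := by
  rw [MvPolynomial.monomial_eq, C_1, one_mul, Finsupp.prod_pow]

lemma S_isHomogeneous :
    ((∑ i : Fin d, X i ^ 2 : MvPolynomial (Fin d) ℝ)).IsHomogeneous 2 :=
  MvPolynomial.IsHomogeneous.sum _ _ _ fun i _ =>
    (MvPolynomial.isHomogeneous_X ℝ i).pow 2

lemma pPoly_isHomogeneous (a : ℕ) (β : Fin d →₀ ℕ) :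
    (((∑ i : Fin d, X i ^ 2) ^ a * monomial β 1 : MvPolynomial (Fin d) ℝ)).IsHomogeneous
      (2 * a + β.degree) :=
  ((S_isHomogeneous.pow a).mul (MvPolynomial.isHomogeneous_monomial _ rfl))

end AUX3
section AUX4

variable {d : ℕ}

lemma rename_S (f : Fin d → Fin d ⊕ Fin d) :
    rename f (∑ i : Fin d, X i ^ 2 : MvPolynomial (Fin d) ℝ)
      = ∑ i : Fin d, X (f i) ^ 2 := by
  rw [map_sum]
  exact Finset.sum_congr rfl fun i _ => by rw [map_pow, rename_X]

lemma distPoly_expand (d κ : ℕ) :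
    distPoly d κ = ∑ b ∈ range (κ + 1), ∑ a ∈ range (κ - b + 1),
      ∑ β ∈ finsuppAntidiag (univ : Finset (Fin d)) b,
        (C ((-2 : ℝ) ^ b * (Nat.multinomial univ β : ℝ)
            * (κ.choose b : ℝ) * ((κ - b).choose a : ℝ)) *
          (rename Sum.inl ((∑ i, X i ^ 2) ^ a * monomial β 1) *
           rename Sum.inr ((∑ i, X i ^ 2) ^ (κ - b - a) * monomial β 1))) := by
  have key : (∑ i : Fin d, (X (Sum.inl i) - X (Sum.inr i)) ^ 2 :
        MvPolynomial (Fin d ⊕ Fin d) ℝ)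
      = (-2) * (∑ i : Fin d, X (Sum.inl i) * X (Sum.inr i))
        + (rename Sum.inl (∑ i, X i ^ 2) + rename Sum.inr (∑ i, X i ^ 2)) := by
    rw [rename_S, rename_S, Finset.mul_sum, ← Finset.sum_add_distrib,
      ← Finset.sum_add_distrib]
    exact Finset.sum_congr rfl fun i _ => by ring
  rw [distPoly, key, add_pow]
  refine Finset.sum_congr rfl fun b hb => ?_
  rw [mul_pow, sum_pow_finsuppAntidiag, add_pow, Finset.mul_sum, Finset.sum_mul]
  refine Finset.sum_congr rfl fun a ha => ?_
  rw [Finset.mul_sum, Finset.sum_mul, Finset.sum_mul]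
  refine Finset.sum_congr rfl fun β hβ => ?_
  simp only [monomial_one_eq, map_mul, map_pow, map_prod, rename_S, rename_X,
    map_natCast, map_neg, map_ofNat, mul_pow, Finset.prod_mul_distrib]
  ring
end AUX4
section AUX5

variable {d : ℕ}

lemma degree_of_mem_fA {b : ℕ} {β : Fin d →₀ ℕ}
    (h : β ∈ finsuppAntidiag (univ : Finset (Fin d)) b) : β.degree = b := by
  rw [Finset.mem_finsuppAntidiag] at h
  rw [← h.1, Finsupp.degree]
  exact Finset.sum_subset (Finset.subset_univ _)
    (fun i _ hi => Finsupp.notMem_support_iff.mp hi)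

lemma HC_AS_distPoly (d κ : ℕ) (lam : Module.Dual ℝ (MvPolynomial (Fin d) ℝ)) :
    MvPolynomial.homogeneousComponent κ (applySecond lam (distPoly d κ))
      = ∑ b ∈ range (κ + 1), ∑ a ∈ range (κ - b + 1),
          ∑ β ∈ finsuppAntidiag (univ : Finset (Fin d)) b,
            (if κ = 2 * a + b then
              ((-2 : ℝ) ^ b * (Nat.multinomial univ β : ℝ) * (κ.choose b : ℝ)
                * ((κ - b).choose a : ℝ)
                * lam ((∑ i, X i ^ 2) ^ (κ - b - a) * monomial β 1)) •
                ((∑ i, X i ^ 2) ^ a * monomial β 1)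
             else 0) := by
  have hAS : applySecond lam (distPoly d κ) = AS lam (distPoly d κ) := rfl
  rw [hAS, distPoly_expand, map_sum, map_sum]
  refine Finset.sum_congr rfl fun b _ => ?_
  rw [map_sum, map_sum]
  refine Finset.sum_congr rfl fun a _ => ?_
  rw [map_sum, map_sum]
  refine Finset.sum_congr rfl fun β hβ => ?_
  rw [← MvPolynomial.smul_eq_C_mul, map_smul, AS_rename_mul, map_smul, map_smul,
    MvPolynomial.homogeneousComponent_of_mem
      ((MvPolynomial.mem_homogeneousSubmodule _ _).mpr (pPoly_isHomogeneous a β)),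
    degree_of_mem_fA hβ]
  split_ifs with h
  · rw [smul_smul]
  · rw [smul_zero, smul_zero]

end AUX5
section AUX6

lemma main_eq (d κ : ℕ) (lam : Module.Dual ℝ (MvPolynomial (Fin d) ℝ)) :
    MvPolynomial.homogeneousComponent κ (applySecond lam (distPoly d κ))
      = ∑ b ∈ (range (κ + 1)).filter (fun b => Even (κ - b)),
      ((-1 : ℝ) ^ κ * 2 ^ b * (κ.factorial : ℝ) / (((κ - b) / 2).factorial : ℝ) ^ 2) •
        ∑ β ∈ finsuppAntidiag (univ : Finset (Fin d)) b,
          (lam (pPoly d ((κ - b) / 2) β) / ((β.prod fun _ e => e.factorial : ℕ) : ℝ)) •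
            ((∑ i : Fin d, X i ^ 2) ^ ((κ - b) / 2) * monomial β 1) := by
  rw [HC_AS_distPoly, Finset.sum_filter]
  refine Finset.sum_congr rfl fun b hb => ?_
  rw [mem_range] at hb
  have hbκ : b ≤ κ := by omega
  by_cases hEv : Even (κ - b)
  · rw [if_pos hEv]
    obtain ⟨k, hk⟩ := hEv
    have h1 : κ = 2 * k + b := by omega
    have ha0 : (κ - b) / 2 = k := by omega
    have h2 : κ - b - k = k := by omega
    rw [ha0]
    rw [Finset.sum_eq_single_of_mem k (by rw [mem_range]; omega)]
    · rw [Finset.smul_sum]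
      refine Finset.sum_congr rfl fun β hβ => ?_
      rw [if_pos h1, h2, smul_smul]
      congr 1
      rw [pPoly]
      -- real-number coefficient identity
      have hsum : ∑ i, β i = b := by
        rw [Finset.mem_finsuppAntidiag] at hβ
        exact hβ.1
      have hQ : (β.prod fun _ e => e.factorial) = ∏ i, (β i).factorial :=
        Finsupp.prod_fintype _ _ fun i => rfl
      have e1 : ((κ - b).choose k) * k.factorial * k.factorial = (κ - b).factorial := by
        have := Nat.choose_mul_factorial_mul_factorial (show k ≤ κ - b by omega)
        rwa [show κ - b - k = k by omega] at this
      have e2 : (∏ i, (β i).factorial) * Nat.multinomial univ β = b.factorial := by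
        have := Nat.multinomial_spec (univ : Finset (Fin d)) ⇑β
        rwa [hsum] at this
      have e3 : κ.choose b * b.factorial * (κ - b).factorial = κ.factorial :=
        Nat.choose_mul_factorial_mul_factorial hbκ
      have e1R : (((κ - b).choose k : ℝ)) * k.factorial * k.factorial
          = ((κ - b).factorial : ℝ) := by exact_mod_cast congrArg Nat.cast e1
      have e2R : ((∏ i, (β i).factorial : ℕ) : ℝ) * (Nat.multinomial univ β : ℝ)
          = (b.factorial : ℝ) := by exact_mod_cast congrArg Nat.cast e2
      have e3R : (κ.choose b : ℝ) * b.factorial * ((κ - b).factorial : ℝ)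
          = (κ.factorial : ℝ) := by exact_mod_cast congrArg Nat.cast e3
      have hsgn : ((-2 : ℝ)) ^ b = (-1 : ℝ) ^ κ * 2 ^ b := by
        have : ((-1 : ℝ)) ^ κ = (-1 : ℝ) ^ b := by
          rw [show κ = 2 * k + b from h1, pow_add, pow_mul]
          norm_num
        rw [this, show ((-2 : ℝ)) = (-1) * 2 by norm_num, mul_pow]
      have hKne : ((k.factorial : ℝ)) ≠ 0 := by
        exact_mod_cast k.factorial_ne_zero
      have hQne : ((∏ i, (β i).factorial : ℕ) : ℝ) ≠ 0 := by
        have : 0 < ∏ i, (β i).factorial :=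
          Finset.prod_pos fun i _ => (β i).factorial_pos
        exact_mod_cast this.ne'
      rw [hQ, hsgn, ← e3R, ← e2R, ← e1R]
      push_cast
      field_simp
    · intro a _ hak
      refine Finset.sum_eq_zero fun β _ => ?_
      rw [if_neg]
      omega
  · rw [if_neg hEv]
    refine Finset.sum_eq_zero fun a _ => Finset.sum_eq_zero fun β _ => ?_
    rw [if_neg]
    intro h
    exact hEv ⟨a, by omega⟩

end AUX6
section AUX7

lemma exists_top (d κ : ℕ) (lam : Module.Dual ℝ (MvPolynomial (Fin d) ℝ))
    (hvan : VanishesLT lam κ) (horder : ¬ VanishesLT lam (κ + 1)) :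
    ∃ β₀ : Fin d →₀ ℕ, β₀ ∈ finsuppAntidiag (univ : Finset (Fin d)) κ ∧
      lam (monomial β₀ 1) ≠ 0 := by
  rw [VanishesLT] at horder
  push_neg at horder
  obtain ⟨p, hpd, hlp⟩ := horder
  by_contra hall
  push_neg at hall
  apply hlp
  have hrep : (∑ m ∈ p.support, monomial m (MvPolynomial.coeff m p)) = p :=
    MvPolynomial.support_sum_monomial_coeff p
  rw [← hrep, map_sum]
  refine Finset.sum_eq_zero fun m hm => ?_
  have hmon : (monomial m (MvPolynomial.coeff m p))
      = (MvPolynomial.coeff m p) • monomial m (1 : ℝ) := by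
    rw [MvPolynomial.smul_monomial, smul_eq_mul, mul_one]
  rw [hmon, map_smul, smul_eq_mul]
  have hdm : (m.sum fun _ e => e) ≤ κ := by
    have h1 : (m.sum fun _ e => e) ≤ p.totalDegree := MvPolynomial.le_totalDegree hm
    omega
  rcases lt_or_eq_of_le hdm with hlt | heq
  · rw [hvan (monomial m 1) (by
      rw [MvPolynomial.totalDegree_monomial _ (one_ne_zero)]; exact hlt), mul_zero]
  · rw [hall m (by
      rw [Finset.mem_finsuppAntidiag]
      refine ⟨?_, Finset.subset_univ _⟩
      rw [← heq]
      exact (Finset.sum_subset (Finset.subset_univ _)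
        (fun i _ hi => Finsupp.notMem_support_iff.mp hi)).symm), mul_zero]

end AUX7
/-- For a nonzero functional `λ` of order `κ`, the degree-`κ` homogeneous (leading) part of
Schaback's polynomial `w : x ↦ λ‖x−·‖^(2κ)` is
`(−1)^κ ∑_{κ−b even} 2^b κ!/(((κ−b)/2)!)² ∑_{|β|=b} (λ p_{(κ−b)/2,β}) ‖x‖^(κ−b) x^β / β!`,
and this homogeneous polynomial of degree `κ` is nonzero (so `deg w = κ`). -/
theorem schaback_w_leading_term (d κ : ℕ)
    (lam : Module.Dual ℝ (MvPolynomial (Fin d) ℝ)) (hlam : lam ≠ 0)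
    (hvan : VanishesLT lam κ) (horder : ¬ VanishesLT lam (κ + 1))
    (L : MvPolynomial (Fin d) ℝ)
    (hL : L = ∑ b ∈ (range (κ + 1)).filter (fun b => Even (κ - b)),
      ((-1 : ℝ) ^ κ * 2 ^ b * (κ.factorial : ℝ) / (((κ - b) / 2).factorial : ℝ) ^ 2) •
        ∑ β ∈ finsuppAntidiag (univ : Finset (Fin d)) b,
          (lam (pPoly d ((κ - b) / 2) β) / ((β.prod fun _ e => e.factorial : ℕ) : ℝ)) •
            ((∑ i : Fin d, X i ^ 2) ^ ((κ - b) / 2) * monomial β 1)) :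
    MvPolynomial.homogeneousComponent κ (applySecond lam (distPoly d κ)) = L ∧ L ≠ 0 := by
  constructor
  · rw [hL]
    exact main_eq d κ lam
  · obtain ⟨β₀, hβ₀mem, hβ₀⟩ := exists_top d κ lam hvan horder
    intro h0
    have hcomp : lam L = (-1 : ℝ) ^ κ *
        ∑ b ∈ (range (κ + 1)).filter (fun b => Even (κ - b)),
          (2 ^ b * (κ.factorial : ℝ) / (((κ - b) / 2).factorial : ℝ) ^ 2) *
            ∑ β ∈ finsuppAntidiag (univ : Finset (Fin d)) b,
              lam (pPoly d ((κ - b) / 2) β) ^ 2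
                / ((β.prod fun _ e => e.factorial : ℕ) : ℝ) := by
      rw [hL, map_sum, Finset.mul_sum]
      refine Finset.sum_congr rfl fun b _ => ?_
      rw [map_smul, smul_eq_mul, map_sum, Finset.mul_sum, Finset.mul_sum, Finset.mul_sum]
      refine Finset.sum_congr rfl fun β _ => ?_
      rw [map_smul, smul_eq_mul,
        show ((∑ i : Fin d, X i ^ 2) ^ ((κ - b) / 2) * monomial β (1 : ℝ))
          = pPoly d ((κ - b) / 2) β from rfl]
      ring
    have hne : lam L ≠ 0 := by
      rw [hcomp]
      refine mul_ne_zero (pow_ne_zero _ (by norm_num)) (ne_of_gt ?_)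
      have hQpos : ∀ β : Fin d →₀ ℕ, (0 : ℝ) < ((β.prod fun _ e => e.factorial : ℕ) : ℝ) := by
        intro β
        have : 0 < β.prod fun _ e => e.factorial :=
          Finset.prod_pos fun i _ => Nat.factorial_pos _
        exact_mod_cast this
      refine Finset.sum_pos' (fun b _ => mul_nonneg (by positivity)
        (Finset.sum_nonneg fun β _ => div_nonneg (sq_nonneg _) (hQpos β).le))
        ⟨κ, ?_, ?_⟩
      · rw [Finset.mem_filter]
        exact ⟨Finset.mem_range.mpr (by omega), by simp⟩
      · refine mul_pos (by positivity) ?_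
        refine Finset.sum_pos'
          (fun β _ => div_nonneg (sq_nonneg _) (hQpos β).le) ⟨β₀, hβ₀mem, ?_⟩
        have hp0 : pPoly d ((κ - κ) / 2) β₀ = monomial β₀ 1 := by
          rw [pPoly, Nat.sub_self]
          norm_num
        rw [hp0]
        exact div_pos (lt_of_le_of_ne (sq_nonneg _) (Ne.symm (pow_ne_zero 2 hβ₀))) (hQpos β₀)
    exact hne (by rw [h0, map_zero])
end
end
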